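/- arXiv:2007.00593 — 6 statements merged into one kernel-verified Lean document; each statement's English description precedes it below -/
import Mathlib

section
/- Let J ∈ E and φ ∈ ℝ satisfy |φ|·‖J‖ < (√2 − 1)/2, and set J̄ := J − (1/2 + φ‖J‖)·h(J). Then ‖J̄‖_h ≤ ‖J‖ − φ·⟨h(J), J⟩ (in particular the right-hand side is nonnegative). This is the key inequality in the proof of the lemma on preservation of the dominant energy scalar under the (φ,J)-modified constraint operator. -/
open scoped RealInnerProductSpace

/-- The norm associated to the perturbed inner product
`⟪v, w⟫_h := ⟪v, w⟫ + ⟪h v, w⟫` coming from a perturbation `h` of the metric. -/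
noncomputable def perturbedNorm {E : Type*} [NormedAddCommGroup E] [InnerProductSpace ℝ E]
    (h : E →L[ℝ] E) (v : E) : ℝ :=
  Real.sqrt (⟪v, v⟫ + ⟪h v, v⟫)

/-- if `|φ|·‖J‖ < (√2 − 1)/2` and `J̄ := J − (1/2 + φ‖J‖)·h(J)`, then
`‖J̄‖_h ≤ ‖J‖ − φ·⟨h(J), J⟩`, the right-hand side being nonnegative. -/
theorem perturbedNorm_modified_current_le
    {E : Type*} [NormedAddCommGroup E] [InnerProductSpace ℝ E] [FiniteDimensional ℝ E]
    (h : E →L[ℝ] E) (hsa : ∀ v w : E, ⟪h v, w⟫ = ⟪v, h w⟫) (hnorm : ‖h‖ < 1)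
    (J : E) (φ : ℝ) (hφ : |φ| * ‖J‖ < (Real.sqrt 2 - 1) / 2) :
    perturbedNorm h (J - (1 / 2 + φ * ‖J‖) • h J) ≤ ‖J‖ - φ * ⟪h J, J⟫ ∧
      0 ≤ ‖J‖ - φ * ⟪h J, J⟫ := by
  set a : ℝ := 1 / 2 + φ * ‖J‖ with ha
  set t : ℝ := ⟪h J, J⟫ with ht
  have hs2 : (1:ℝ) ≤ Real.sqrt 2 ∧ Real.sqrt 2 < 2 := by
    constructor
    · nlinarith [Real.sq_sqrt (by norm_num : (2:ℝ) ≥ 0), Real.sqrt_nonneg 2]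
    · nlinarith [Real.sq_sqrt (by norm_num : (2:ℝ) ≥ 0), Real.sqrt_nonneg 2]
  have habs : -(|φ| * ‖J‖) ≤ φ * ‖J‖ ∧ φ * ‖J‖ ≤ |φ| * ‖J‖ := by
    constructor
    · nlinarith [neg_abs_le φ, norm_nonneg J]
    · nlinarith [le_abs_self φ, norm_nonneg J]
  have hφJ : |φ| * ‖J‖ < 1 / 2 := by
    calc |φ| * ‖J‖ < (Real.sqrt 2 - 1) / 2 := hφ
    _ < 1 / 2 := by nlinarith [hs2.2]
  have ha0 : 0 < a := by simp only [ha]; nlinarith [habs.1]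
  have ha1 : a ≤ 1 := by simp only [ha]; nlinarith [habs.2]
  have hhn : 0 ≤ ‖h‖ := norm_nonneg h
  -- bound |t| ≤ ‖J‖²
  have htb : |t| ≤ ‖J‖ ^ 2 := by
    calc |t| ≤ ‖h J‖ * ‖J‖ := abs_real_inner_le_norm _ _
    _ ≤ (‖h‖ * ‖J‖) * ‖J‖ := by
        have := h.le_opNorm J
        nlinarith [norm_nonneg J]
    _ ≤ ‖J‖ ^ 2 := by nlinarith [norm_nonneg J, sq_nonneg (‖J‖)]
  -- RHS nonnegative
  have hrhs : 0 ≤ ‖J‖ - φ * t := by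
    have h1 : |φ * t| ≤ |φ| * ‖J‖ ^ 2 := by
      rw [abs_mul]
      exact mul_le_mul_of_nonneg_left htb (abs_nonneg φ)
    have h2 : |φ| * ‖J‖ ^ 2 ≤ ‖J‖ := by
      have := mul_le_mul_of_nonneg_right hφJ.le (norm_nonneg J)
      nlinarith [norm_nonneg J]
    nlinarith [le_abs_self (φ * t)]
  refine ⟨?_, hrhs⟩
  set b : ℝ := ⟪h J, h J⟫ with hb
  set c : ℝ := ⟪h (h J), h J⟫ with hc
  have hb0 : 0 ≤ b := real_inner_self_nonneg
  have hcb : c ≤ b := by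
    have h1 : |c| ≤ ‖h (h J)‖ * ‖h J‖ := abs_real_inner_le_norm _ _
    have h2 : ‖h (h J)‖ ≤ ‖h‖ * ‖h J‖ := h.le_opNorm _
    have h3 : b = ‖h J‖ ^ 2 := by
      simp [hb, real_inner_self_eq_norm_sq]
    nlinarith [le_abs_self c, norm_nonneg (h J), hnorm]
  -- expand the perturbed norm squared
  have hexp : ⟪J - a • h J, J - a • h J⟫ + ⟪h (J - a • h J), J - a • h J⟫
      = ‖J‖ ^ 2 + (1 - 2 * a) * t + (a ^ 2 - 2 * a) * b + a ^ 2 * c := by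
    have e1 : ⟪J, h J⟫ = t := real_inner_comm (h J) J
    have e2 : ⟪h (h J), J⟫ = b := by rw [hsa (h J) J]
    have eJ : ⟪J, J⟫ = ‖J‖ ^ 2 := real_inner_self_eq_norm_sq J
    simp only [map_sub, map_smul, inner_sub_left, inner_sub_right,
      real_inner_smul_left, real_inner_smul_right]
    simp only [e1, e2, eJ]
    ring
  have hkey : ⟪J - a • h J, J - a • h J⟫ + ⟪h (J - a • h J), J - a • h J⟫
      ≤ (‖J‖ - φ * t) ^ 2 := by
    rw [hexp]
    have h1a : 1 - 2 * a = -(2 * (φ * ‖J‖)) := by rw [ha]; ring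
    rw [h1a]
    nlinarith [mul_le_mul_of_nonneg_left hcb (sq_nonneg a), sq_nonneg (φ * t),
      mul_nonneg (mul_nonneg ha0.le hb0) (sub_nonneg.mpr ha1)]
  rw [perturbedNorm]
  calc Real.sqrt (⟪J - a • h J, J - a • h J⟫ + ⟪h (J - a • h J), J - a • h J⟫)
      ≤ Real.sqrt ((‖J‖ - φ * t) ^ 2) := Real.sqrt_le_sqrt hkey
    _ = ‖J‖ - φ * t := by rw [Real.sqrt_sq hrhs]
end

section
/- Let J ∈ E and φ ∈ ℝ satisfy |φ|·‖J‖ < (√2 − 1)/2, and let μ, u ∈ ℝ. Set J̄ := J − (1/2 + φ‖J‖)·h(J) and μ̄ := μ + u/2 − φ·⟨h(J), J⟩. Then 2(μ̄ − ‖J̄‖_h) ≥ 2(μ − ‖J‖) + u. (Pointwise form of the lemma: if Φ^{(φ,J)}_{(γ,τ)}(γ̄,τ̄) = Φ^{(φ,J)}_{(γ,τ)}(γ,τ) + (u,0) with |γ̄−γ|_γ < 1 and |φJ|_γ < (√2−1)/2, then σ(γ̄,τ̄) ≥ σ(γ,τ) + u.) -/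
set_option maxHeartbeats 1000000


open scoped RealInnerProductSpace

/-- with `J̄ := J − (1/2 + φ‖J‖)·h(J)` and `μ̄ := μ + u/2 − φ·⟨h(J), J⟩`,
if `|φ|·‖J‖ < (√2 − 1)/2` then `2(μ̄ − ‖J̄‖_h) ≥ 2(μ − ‖J‖) + u`. -/
theorem dominantEnergyScalar_ge_of_phiJ_modified
    {E : Type*} [NormedAddCommGroup E] [InnerProductSpace ℝ E] [FiniteDimensional ℝ E]
    (h : E →L[ℝ] E) (hsa : ∀ v w : E, ⟪h v, w⟫ = ⟪v, h w⟫) (hnorm : ‖h‖ < 1)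
    (J : E) (φ : ℝ) (hφ : |φ| * ‖J‖ < (Real.sqrt 2 - 1) / 2) (μ u : ℝ) :
    2 * ((μ + u / 2 - φ * ⟪h J, J⟫) - perturbedNorm h (J - (1 / 2 + φ * ‖J‖) • h J))
      ≥ 2 * (μ - ‖J‖) + u := by
  set n : ℝ := ‖J‖ with hn
  set t : ℝ := ⟪h J, J⟫ with ht
  set s : ℝ := ⟪h J, h J⟫ with hs
  set r : ℝ := ⟪h (h J), h J⟫ with hr
  have hn0 : 0 ≤ n := norm_nonneg J
  have hh0 : 0 ≤ ‖h‖ := norm_nonneg _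
  have hhJ : ‖h J‖ ≤ ‖h‖ * n := h.le_opNorm J
  have hhJn : ‖h J‖ ≤ n := hhJ.trans (by nlinarith)
  have hs_eq : s = ‖h J‖ ^ 2 := by
    rw [hs, real_inner_self_eq_norm_sq]
  have hs0 : 0 ≤ s := by rw [hs_eq]; positivity
  have hsn : s ≤ n ^ 2 := by rw [hs_eq]; nlinarith [norm_nonneg (h J)]
  have hr_le : r ≤ s := by
    have h1 : r ≤ ‖h (h J)‖ * ‖h J‖ := real_inner_le_norm _ _
    have h2 : ‖h (h J)‖ ≤ ‖h‖ * ‖h J‖ := h.le_opNorm _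
    have := norm_nonneg (h J)
    rw [hs_eq]
    nlinarith
  have ht_abs : |t| ≤ n ^ 2 := by
    have h1 : |t| ≤ ‖h J‖ * n := abs_real_inner_le_norm _ _
    nlinarith
  have hphi : |φ| * n < 1 / 2 := by
    have h2 : Real.sqrt 2 < 2 := by
      have := Real.sq_sqrt (by norm_num : (2:ℝ) ≥ 0)
      nlinarith [Real.sqrt_nonneg 2]
    linarith
  have hphi0 : 0 ≤ |φ| := abs_nonneg φ
  have hphiabs : φ ≤ |φ| := le_abs_self φ
  have hphiabs' : -|φ| ≤ φ := neg_abs_le φ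
  have htfull : -(|φ| * n ^ 2) ≤ φ * t ∧ φ * t ≤ |φ| * n ^ 2 := by
    constructor <;> nlinarith [abs_nonneg t, le_abs_self t, neg_abs_le t,
      le_abs_self (φ * t), neg_abs_le (φ * t), abs_mul φ t,
      mul_le_mul_of_nonneg_left ht_abs hphi0]
  -- symmetry facts
  have hsym1 : ⟪J, h J⟫ = t := (real_inner_comm J (h J)).symm
  have hsym2 : ⟪h (h J), J⟫ = s := by rw [hsa (h J) J, hs, real_inner_comm]
  -- expand the perturbed quadratic form
  set a : ℝ := 1 / 2 + φ * n with ha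
  clear_value a
  have hQ : ⟪J - a • h J, J - a • h J⟫ + ⟪h (J - a • h J), J - a • h J⟫
      = n ^ 2 - 2 * φ * n * t + (a ^ 2 - 2 * a) * s + a ^ 2 * r := by
    have hJJ : ⟪J, J⟫ = n ^ 2 := real_inner_self_eq_norm_sq J
    simp only [map_sub, map_smul, inner_sub_left, inner_sub_right,
      inner_smul_left, inner_smul_right, RCLike.conj_to_real]
    rw [hJJ, hsym1, hsym2, ← ht, ← hs, ← hr, ha]
    ring
  have hbound : perturbedNorm h (J - a • h J) ≤ n - φ * t := by
    have hrhs0 : 0 ≤ n - φ * t := by nlinarith [htfull.2]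
    have hle : ⟪J - a • h J, J - a • h J⟫ + ⟪h (J - a • h J), J - a • h J⟫
        ≤ (n - φ * t) ^ 2 := by
      rw [hQ]
      have hphin2 : φ ^ 2 * n ^ 2 ≤ 1 / 4 := by
        nlinarith [sq_abs φ, mul_nonneg hphi0 hn0]
      have h1 : a ^ 2 * r ≤ a ^ 2 * s := mul_le_mul_of_nonneg_left hr_le (sq_nonneg a)
      have h3 : (2 * a - 2 * a ^ 2) * s = (1 / 2 - 2 * (φ ^ 2 * n ^ 2)) * s := by
        rw [ha]; ring
      have h4 : φ ^ 2 * n ^ 2 * s ≤ 1 / 4 * s := mul_le_mul_of_nonneg_right hphin2 hs0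
      have key : (a ^ 2 - 2 * a) * s + a ^ 2 * r ≤ φ ^ 2 * (t * t) := by
        nlinarith [sq_nonneg (φ * t), h1, h3, h4]
      nlinarith [key]
    calc perturbedNorm h (J - a • h J)
        ≤ Real.sqrt ((n - φ * t) ^ 2) := Real.sqrt_le_sqrt hle
      _ = n - φ * t := Real.sqrt_sq hrhs0
  linarith [hbound]
end

section
/- Let J, Z ∈ E and φ ∈ ℝ with |φ| < 1 and ‖Z‖ < 1, and set J̄ := J − (1/2)·h(J) − φ‖Z‖·h(Z). Then ‖J̄‖_h ≤ ‖J‖ + 2·‖h‖^{1/2}·|φ|^{1/2}·‖Z‖·(‖J‖^{1/2} + 1). This is the key inequality in the proof of the error estimate for the (φ,Z)-modified constraint operator. -/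
open scoped RealInnerProductSpace

lemma expand_aux {E : Type*} [AddCommGroup E] [Module ℝ E]
    (B : E → E → ℝ)
    (hadd : ∀ a b c : E, B (a + b) c = B a c + B b c)
    (hsmul : ∀ (t : ℝ) (a b : E), B (t • a) b = t * B a b)
    (hsymm : ∀ a b : E, B a b = B b a)
    (a b : E) (t : ℝ) :
    B (a + t • b) (a + t • b) = B a a + 2 * t * B a b + t ^ 2 * B b b := by
  rw [hadd, hsmul, hsymm a (a + t • b), hadd, hsmul, hsymm b (a + t • b), hadd, hsmul,
    hsymm b a]
  ring

lemma cs_aux {E : Type*} [AddCommGroup E] [Module ℝ E]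
    (B : E → E → ℝ)
    (hadd : ∀ a b c : E, B (a + b) c = B a c + B b c)
    (hsmul : ∀ (t : ℝ) (a b : E), B (t • a) b = t * B a b)
    (hsymm : ∀ a b : E, B a b = B b a)
    (hng : ∀ v : E, 0 ≤ B v v) (a b : E) :
    B a b ^ 2 ≤ B a a * B b b := by
  have hd : discrim (B b b) (2 * B a b) (B a a) ≤ 0 := by
    apply discrim_le_zero
    intro x
    have hx := hng (a + x • b)
    rw [expand_aux B hadd hsmul hsymm a b x] at hx
    nlinarith [hx]
  rw [discrim] at hd
  nlinarith [hd]

set_option maxHeartbeats 2000000 in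
/-- if `|φ| < 1`, `‖Z‖ < 1`, and `J̄ := J − (1/2)·h(J) − φ‖Z‖·h(Z)`, then
`‖J̄‖_h ≤ ‖J‖ + 2·‖h‖^{1/2}·|φ|^{1/2}·‖Z‖·(‖J‖^{1/2} + 1)`. -/
theorem perturbedNorm_phiZ_modified_current_le
    {E : Type*} [NormedAddCommGroup E] [InnerProductSpace ℝ E] [FiniteDimensional ℝ E]
    (h : E →L[ℝ] E) (hsa : ∀ v w : E, ⟪h v, w⟫ = ⟪v, h w⟫) (hnorm : ‖h‖ < 1)
    (J Z : E) (φ : ℝ) (hφ : |φ| < 1) (hZ : ‖Z‖ < 1) :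
    perturbedNorm h (J - (1 / 2 : ℝ) • h J - (φ * ‖Z‖) • h Z)
      ≤ ‖J‖ + 2 * Real.sqrt ‖h‖ * Real.sqrt |φ| * ‖Z‖ * (Real.sqrt ‖J‖ + 1) := by
  obtain ⟨B, hB⟩ : ∃ B : E → E → ℝ, ∀ v w, B v w = ⟪v, w⟫ + ⟪h v, w⟫ :=
    ⟨fun v w => ⟪v, w⟫ + ⟪h v, w⟫, fun _ _ => rfl⟩
  have hadd : ∀ a b c : E, B (a + b) c = B a c + B b c := by
    intro a b c
    simp only [hB, map_add, inner_add_left]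
    ring
  have hsmul : ∀ (t : ℝ) (a b : E), B (t • a) b = t * B a b := by
    intro t a b
    simp only [hB, map_smul, real_inner_smul_left]
    ring
  have hsymm : ∀ a b : E, B a b = B b a := by
    intro a b
    simp only [hB]
    rw [real_inner_comm a b, hsa a b, real_inner_comm a (h b)]
  have hng : ∀ v : E, 0 ≤ B v v := by
    intro v
    have h1 : |⟪h v, v⟫| ≤ ‖h v‖ * ‖v‖ := abs_real_inner_le_norm _ _
    have h2 : ‖h v‖ ≤ ‖h‖ * ‖v‖ := h.le_opNorm v
    have h3 : ⟪v, v⟫ = ‖v‖ ^ 2 := real_inner_self_eq_norm_sq v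
    have h4 := norm_nonneg v
    have h5 := norm_nonneg (h v)
    have h6 := abs_le.mp h1
    simp only [hB, h3]
    nlinarith [h6.1, hnorm.le]
  obtain ⟨a, ha⟩ : ∃ a : E, a = J - (1 / 2 : ℝ) • h J := ⟨_, rfl⟩
  obtain ⟨b, hb⟩ : ∃ b : E, b = (φ * ‖Z‖) • h Z := ⟨_, rfl⟩
  rw [← ha, ← hb]
  have hQa := hng a
  have hQb := hng b
  -- Cauchy–Schwarz for the perturbed form
  have hcs := cs_aux B hadd hsmul hsymm hng a b
  have hBab : |B a b| ≤ Real.sqrt (B a a) * Real.sqrt (B b b) := by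
    have h1 : |B a b| = Real.sqrt (B a b ^ 2) := (Real.sqrt_sq_eq_abs _).symm
    have h2 : Real.sqrt (B a b ^ 2) ≤ Real.sqrt (B a a * B b b) :=
      Real.sqrt_le_sqrt hcs
    rw [Real.sqrt_mul hQa] at h2
    linarith
  have hBab' : -(B a b) ≤ Real.sqrt (B a a) * Real.sqrt (B b b) :=
    le_trans (neg_le_abs _) hBab
  have hsub : B (a - b) (a - b) = B a a + 2 * (-1) * B a b + (-1) ^ 2 * B b b := by
    have heq : a - b = a + (-1 : ℝ) • b := by
      rw [neg_one_smul, sub_eq_add_neg]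
    rw [heq, expand_aux B hadd hsmul hsymm a b (-1)]
  have hsqa := Real.sq_sqrt hQa
  have hsqb := Real.sq_sqrt hQb
  have hsna := Real.sqrt_nonneg (B a a)
  have hsnb := Real.sqrt_nonneg (B b b)
  have tri : Real.sqrt (B (a - b) (a - b)) ≤ Real.sqrt (B a a) + Real.sqrt (B b b) := by
    have h1 : B (a - b) (a - b) ≤ (Real.sqrt (B a a) + Real.sqrt (B b b)) ^ 2 := by
      rw [hsub]; nlinarith [hBab']
    calc Real.sqrt (B (a - b) (a - b))
        ≤ Real.sqrt ((Real.sqrt (B a a) + Real.sqrt (B b b)) ^ 2) := Real.sqrt_le_sqrt h1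
      _ = Real.sqrt (B a a) + Real.sqrt (B b b) := Real.sqrt_sq (by positivity)
  -- bound on B a a
  have hQa_le : B a a ≤ ‖J‖ ^ 2 := by
    have hexp : B a a = ⟪J, J⟫ - (3 / 4) * ⟪h J, h J⟫ + (1 / 4) * ⟪h (h J), h J⟫ := by
      simp only [hB, ha, map_sub, map_smul, inner_sub_left, inner_sub_right,
        real_inner_smul_left, real_inner_smul_right]
      rw [hsa J J, real_inner_comm (h J) J, hsa (h J) J, real_inner_comm (h J) (h J),
        hsa J (h J)]
      ring
    have h1 : |⟪h (h J), h J⟫| ≤ ‖h (h J)‖ * ‖h J‖ := abs_real_inner_le_norm _ _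
    have h2 : ‖h (h J)‖ ≤ ‖h‖ * ‖h J‖ := h.le_opNorm (h J)
    have h3 : ⟪J, J⟫ = ‖J‖ ^ 2 := real_inner_self_eq_norm_sq J
    have h4 : ⟪h J, h J⟫ = ‖h J‖ ^ 2 := real_inner_self_eq_norm_sq (h J)
    have h5 := norm_nonneg (h J)
    have h6 := abs_le.mp h1
    rw [hexp, h3, h4]
    nlinarith [h6.2, hnorm.le]
  have hsqrtQa : Real.sqrt (B a a) ≤ ‖J‖ := by
    calc Real.sqrt (B a a) ≤ Real.sqrt (‖J‖ ^ 2) := Real.sqrt_le_sqrt hQa_le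
      _ = ‖J‖ := Real.sqrt_sq (norm_nonneg J)
  -- bound on B b b
  obtain ⟨X, hX⟩ : ∃ X : ℝ, X = 2 * Real.sqrt ‖h‖ * Real.sqrt |φ| * ‖Z‖ := ⟨_, rfl⟩
  have hXnn : 0 ≤ X := by rw [hX]; positivity
  have h8 : (0 : ℝ) ≤ ‖h‖ := norm_nonneg _
  have h9 := abs_nonneg φ
  have hQb_le : B b b ≤ X ^ 2 := by
    have hbb : B b b = (φ * ‖Z‖) ^ 2 * (⟪h Z, h Z⟫ + ⟪h (h Z), h Z⟫) := by
      rw [hb, hsmul, hsymm, hsmul, hB]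
      ring
    have h1 : |⟪h (h Z), h Z⟫| ≤ ‖h (h Z)‖ * ‖h Z‖ := abs_real_inner_le_norm _ _
    have h2 : ‖h (h Z)‖ ≤ ‖h‖ * ‖h Z‖ := h.le_opNorm (h Z)
    have h3 : ⟪h Z, h Z⟫ = ‖h Z‖ ^ 2 := real_inner_self_eq_norm_sq (h Z)
    have h4 : ‖h Z‖ ≤ ‖h‖ * ‖Z‖ := h.le_opNorm Z
    have h5 := norm_nonneg (h Z)
    have h6 := abs_le.mp h1
    have h7 := norm_nonneg Z
    have hX2 : X ^ 2 = 4 * ‖h‖ * |φ| * ‖Z‖ ^ 2 := by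
      have e1 : Real.sqrt ‖h‖ ^ 2 = ‖h‖ := Real.sq_sqrt h8
      have e2 : Real.sqrt |φ| ^ 2 = |φ| := Real.sq_sqrt h9
      rw [hX, mul_pow, mul_pow, mul_pow, e1, e2]
      ring
    have s1 : ⟪h (h Z), h Z⟫ ≤ ‖h Z‖ ^ 2 := by
      nlinarith [h6.2, mul_le_mul_of_nonneg_right h2 h5,
        mul_le_mul_of_nonneg_right (mul_le_mul_of_nonneg_right hnorm.le h5) h5]
    have s2 : ‖h Z‖ ^ 2 + ⟪h (h Z), h Z⟫ ≤ 2 * ‖h Z‖ ^ 2 := by linarith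
    have s3 : ‖h Z‖ ^ 2 ≤ ‖h‖ ^ 2 * ‖Z‖ ^ 2 := by nlinarith [h4, mul_nonneg h8 h7]
    have s4 : (φ * ‖Z‖) ^ 2 ≤ |φ| * ‖Z‖ ^ 2 := by
      have : φ ^ 2 ≤ |φ| := by nlinarith [sq_abs φ]
      nlinarith [sq_nonneg ‖Z‖]
    have s5 : 0 ≤ ‖h Z‖ ^ 2 + ⟪h (h Z), h Z⟫ := by nlinarith [h6.1, mul_nonneg h5 h5]
    rw [hbb, hX2, h3]
    calc (φ * ‖Z‖) ^ 2 * (‖h Z‖ ^ 2 + ⟪h (h Z), h Z⟫)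
        ≤ (|φ| * ‖Z‖ ^ 2) * (2 * (‖h‖ ^ 2 * ‖Z‖ ^ 2)) := by
          apply mul_le_mul s4 (by linarith) s5 (by positivity)
      _ ≤ 4 * ‖h‖ * |φ| * ‖Z‖ ^ 2 := by
          have huz : ‖h‖ * ‖Z‖ ^ 2 ≤ 1 := by nlinarith [hnorm.le, hZ.le, h7, h8]
          nlinarith [huz, mul_nonneg (mul_nonneg h9 h8) (sq_nonneg ‖Z‖)]
  have hsqrtQb : Real.sqrt (B b b) ≤ X := by
    calc Real.sqrt (B b b) ≤ Real.sqrt (X ^ 2) := Real.sqrt_le_sqrt hQb_le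
      _ = X := Real.sqrt_sq hXnn
  -- conclude
  have hpn : perturbedNorm h (a - b) = Real.sqrt (B (a - b) (a - b)) := by
    rw [hB]; rfl
  rw [hpn, ← hX]
  have hsJ := Real.sqrt_nonneg ‖J‖
  nlinarith [tri, hsqrtQa, hsqrtQb, mul_nonneg hXnn hsJ]
end

section
/- Let J, Z ∈ E and φ ∈ ℝ with |φ| < 1 and ‖Z‖ < 1, and let μ, u ∈ ℝ. Set J̄ := J − (1/2)·h(J) − φ‖Z‖·h(Z) and μ̄ := μ + u/2 − φ·⟨h(Z), Z⟩. Then 2(μ̄ − ‖J̄‖_h) ≥ 2(μ − ‖J‖) + u − 6·‖h‖^{1/2}·|φ|^{1/2}·‖Z‖·(‖J‖^{1/2} + 1). (Pointwise form of the lemma: if Φ^{(φ,Z)}_{(γ,τ)}(γ̄,τ̄) = Φ^{(φ,Z)}_{(γ,τ)}(γ,τ) + (u,0) with |γ̄−γ|_γ < 1, |φ| < 1, |Z|_γ < 1, then σ(γ̄,τ̄) ≥ σ(γ,τ) + u − 6|γ̄−γ|_γ^{1/2}|φ|^{1/2}|Z|_γ(|J|_γ^{1/2}+1).) -/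
open scoped RealInnerProductSpace

set_option maxHeartbeats 1000000 in
/-- with `J̄ := J − (1/2)·h(J) − φ‖Z‖·h(Z)` and
`μ̄ := μ + u/2 − φ·⟨h(Z), Z⟩`, if `|φ| < 1` and `‖Z‖ < 1` then
`2(μ̄ − ‖J̄‖_h) ≥ 2(μ − ‖J‖) + u − 6·‖h‖^{1/2}·|φ|^{1/2}·‖Z‖·(‖J‖^{1/2} + 1)`. -/
theorem dominantEnergyScalar_ge_of_phiZ_modified
    {E : Type*} [NormedAddCommGroup E] [InnerProductSpace ℝ E] [FiniteDimensional ℝ E]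
    (h : E →L[ℝ] E) (hsa : ∀ v w : E, ⟪h v, w⟫ = ⟪v, h w⟫) (hnorm : ‖h‖ < 1)
    (J Z : E) (φ : ℝ) (hφ : |φ| < 1) (hZ : ‖Z‖ < 1) (μ u : ℝ) :
    2 * ((μ + u / 2 - φ * ⟪h Z, Z⟫)
        - perturbedNorm h (J - (1 / 2 : ℝ) • h J - (φ * ‖Z‖) • h Z))
      ≥ 2 * (μ - ‖J‖) + u
        - 6 * Real.sqrt ‖h‖ * Real.sqrt |φ| * ‖Z‖ * (Real.sqrt ‖J‖ + 1) := by
  have hh0 : (0:ℝ) ≤ ‖h‖ := norm_nonneg _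
  set a : E := J - (1 / 2 : ℝ) • h J with ha_def
  set b : E := (φ * ‖Z‖) • h Z with hb_def
  set A : ℝ := Real.sqrt ‖h‖ * Real.sqrt |φ| * ‖Z‖ with hA_def
  have hA0 : 0 ≤ A := by positivity
  have hA1 : A ≤ 1 := by
    have hxy : Real.sqrt ‖h‖ * Real.sqrt |φ| ≤ 1 := by
      nlinarith [Real.sqrt_nonneg ‖h‖, Real.sqrt_nonneg |φ|,
        Real.sqrt_le_one.mpr hnorm.le, Real.sqrt_le_one.mpr hφ.le]
    nlinarith [mul_nonneg (Real.sqrt_nonneg ‖h‖) (Real.sqrt_nonneg |φ|),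
      norm_nonneg Z, hZ.le]
  have hA2 : A ^ 2 = ‖h‖ * |φ| * ‖Z‖ ^ 2 := by
    rw [hA_def, mul_pow, mul_pow, Real.sq_sqrt hh0, Real.sq_sqrt (abs_nonneg φ)]
  -- norm bounds
  have hJop : ‖h J‖ ≤ ‖h‖ * ‖J‖ := h.le_opNorm J
  have hJle : ‖h J‖ ≤ ‖J‖ := by nlinarith [norm_nonneg J]
  have ha_norm : ‖a‖ ≤ (3/2) * ‖J‖ := by
    calc ‖a‖ ≤ ‖J‖ + ‖(1/2:ℝ) • h J‖ := norm_sub_le _ _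
      _ = ‖J‖ + (1/2) * ‖h J‖ := by rw [norm_smul]; norm_num
      _ ≤ (3/2) * ‖J‖ := by linarith
  have hb_norm : ‖b‖ ≤ A ^ 2 := by
    have : ‖b‖ = |φ| * ‖Z‖ * ‖h Z‖ := by
      rw [hb_def, norm_smul, Real.norm_eq_abs, abs_mul, abs_norm]
    rw [this, hA2]
    calc |φ| * ‖Z‖ * ‖h Z‖ ≤ |φ| * ‖Z‖ * (‖h‖ * ‖Z‖) := by
          apply mul_le_mul_of_nonneg_left (h.le_opNorm Z) (by positivity)
      _ = ‖h‖ * |φ| * ‖Z‖ ^ 2 := by ring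
  -- the three key inner-product bounds
  have L1 : ⟪a, a⟫ + ⟪h a, a⟫ ≤ ‖J‖ ^ 2 := by
    have e : ⟪a, a⟫ + ⟪h a, a⟫
        = ⟪J, J⟫ - (3/4) * ⟪h J, h J⟫ + (1/4) * ⟪h (h J), h J⟫ := by
      simp only [ha_def, map_sub, map_smul, inner_sub_left, inner_sub_right,
        real_inner_smul_left, real_inner_smul_right]
      rw [real_inner_comm J (h J), hsa (h J) J]
      ring
    have e2 : ⟪h (h J), h J⟫ ≤ ‖h J‖ ^ 2 := by
      calc ⟪h (h J), h J⟫ ≤ ‖h (h J)‖ * ‖h J‖ := real_inner_le_norm _ _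
        _ ≤ ‖h J‖ ^ 2 := by
            have h1 := h.le_opNorm (h J)
            nlinarith [norm_nonneg (h J), norm_nonneg (h (h J))]
    have e3 : ⟪h J, h J⟫ = ‖h J‖ ^ 2 := real_inner_self_eq_norm_sq _
    have e4 : ⟪J, J⟫ = ‖J‖ ^ 2 := real_inner_self_eq_norm_sq _
    rw [e, e3, e4]; linarith [e2, sq_nonneg ‖h J‖]
  have L2 : |⟪a, b⟫ + ⟪h a, b⟫| ≤ 3 * ‖J‖ * A ^ 2 := by
    have e : ⟪a, b⟫ + ⟪h a, b⟫ = ⟪a + h a, b⟫ := (inner_add_left _ _ _).symm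
    rw [e]
    have hab : ‖a + h a‖ ≤ 2 * ‖a‖ := by
      have := h.le_opNorm a
      calc ‖a + h a‖ ≤ ‖a‖ + ‖h a‖ := norm_add_le _ _
        _ ≤ 2 * ‖a‖ := by nlinarith [norm_nonneg a]
    calc |⟪a + h a, b⟫| ≤ ‖a + h a‖ * ‖b‖ := abs_real_inner_le_norm _ _
      _ ≤ (2 * (3 / 2 * ‖J‖)) * A ^ 2 :=
          mul_le_mul (by linarith) hb_norm (norm_nonneg b) (by positivity)
      _ = 3 * ‖J‖ * A ^ 2 := by ring
  have L3 : ⟪b, b⟫ + ⟪h b, b⟫ ≤ 2 * A ^ 2 := by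
    have e : ⟪b, b⟫ + ⟪h b, b⟫ = ⟪b + h b, b⟫ := (inner_add_left _ _ _).symm
    rw [e]
    have hbb : ‖b + h b‖ ≤ 2 * ‖b‖ := by
      have := h.le_opNorm b
      calc ‖b + h b‖ ≤ ‖b‖ + ‖h b‖ := norm_add_le _ _
        _ ≤ 2 * ‖b‖ := by nlinarith [norm_nonneg b]
    have hA2le : A ^ 2 ≤ 1 := by nlinarith
    calc ⟪b + h b, b⟫ ≤ ‖b + h b‖ * ‖b‖ := real_inner_le_norm _ _
      _ ≤ (2 * A ^ 2) * A ^ 2 :=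
          mul_le_mul (by linarith) hb_norm (norm_nonneg b) (by positivity)
      _ ≤ 2 * A ^ 2 := by nlinarith [sq_nonneg A]
  -- expansion of the perturbed quadratic form of a - b
  have hQ : ⟪a - b, a - b⟫ + ⟪h (a - b), a - b⟫
      = (⟪a, a⟫ + ⟪h a, a⟫) - 2 * (⟪a, b⟫ + ⟪h a, b⟫) + (⟪b, b⟫ + ⟪h b, b⟫) := by
    have c1 : ⟪b, a⟫ = ⟪a, b⟫ := real_inner_comm _ _
    have c2 : ⟪h b, a⟫ = ⟪h a, b⟫ := by rw [hsa b a, real_inner_comm]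
    simp only [map_sub, inner_sub_left, inner_sub_right]
    rw [c1, c2]
    ring
  set s : ℝ := Real.sqrt ‖J‖ with hs_def
  have hs0 : 0 ≤ s := Real.sqrt_nonneg _
  have hs2 : s ^ 2 = ‖J‖ := Real.sq_sqrt (norm_nonneg J)
  set R : ℝ := ‖J‖ + 3 * A * s + 2 * A with hR_def
  have hR0 : 0 ≤ R := by positivity
  have hQle : ⟪a - b, a - b⟫ + ⟪h (a - b), a - b⟫ ≤ R ^ 2 := by
    rw [hQ]
    have h2 := abs_le.mp L2
    have : R ^ 2 = ‖J‖ ^ 2 + 9 * A ^ 2 * s ^ 2 + 4 * A ^ 2 + 6 * A * s * ‖J‖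
        + 4 * A * ‖J‖ + 12 * A ^ 2 * s := by rw [hR_def]; ring
    rw [this, ← hs2]
    nlinarith [sq_nonneg A, mul_nonneg hA0 hs0, mul_nonneg (mul_nonneg hA0 hA0) hs0,
      mul_nonneg (mul_nonneg hA0 hs0) (mul_nonneg hs0 hs0)]
  have hpn : perturbedNorm h (a - b) ≤ R := by
    rw [perturbedNorm]
    calc Real.sqrt (⟪a - b, a - b⟫ + ⟪h (a - b), a - b⟫)
        ≤ Real.sqrt (R ^ 2) := Real.sqrt_le_sqrt hQle
      _ = R := Real.sqrt_sq hR0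
  -- bound on the φ⟨hZ,Z⟩ term
  have hφZ : |φ * ⟪h Z, Z⟫| ≤ A ^ 2 := by
    rw [abs_mul, hA2]
    calc |φ| * |⟪h Z, Z⟫| ≤ |φ| * (‖h Z‖ * ‖Z‖) :=
          mul_le_mul_of_nonneg_left (abs_real_inner_le_norm _ _) (abs_nonneg φ)
      _ ≤ |φ| * (‖h‖ * ‖Z‖ * ‖Z‖) := by
          apply mul_le_mul_of_nonneg_left _ (abs_nonneg φ)
          exact mul_le_mul_of_nonneg_right (h.le_opNorm Z) (norm_nonneg Z)
      _ = ‖h‖ * |φ| * ‖Z‖ ^ 2 := by ring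
  have hφZ' : φ * ⟪h Z, Z⟫ ≤ A := by
    have := (abs_le.mp hφZ).2
    nlinarith
  have h6 : 6 * Real.sqrt ‖h‖ * Real.sqrt |φ| * ‖Z‖ * (Real.sqrt ‖J‖ + 1)
      = 6 * A * s + 6 * A := by rw [hA_def, hs_def]; ring
  rw [h6]
  have heq : J - (1 / 2 : ℝ) • h J - (φ * ‖Z‖) • h Z = a - b := by rw [ha_def, hb_def]
  rw [heq]
  linarith [hpn, hφZ']
end

section
/- G(u, w) ≥ 0 for every pair of future causal vectors u, w if and only if p ≤ 0. (Pointwise form of: a null perfect fluid spacetime satisfies the spacetime dominant energy condition if and only if its pressure is nonpositive.) -/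
open scoped RealInnerProductSpace

/-- The Minkowski inner product on `ℝ × ℝⁿ`: `η(u, w) = −u⁰w⁰ + ⟨u', w'⟩`. -/
noncomputable def minkEta {n : ℕ} (u w : ℝ × EuclideanSpace ℝ (Fin n)) : ℝ :=
  -(u.1 * w.1) + ⟪u.2, w.2⟫

/-- A vector `u = (u⁰, u')` is future causal if `u⁰ > 0` and `‖u'‖ ≤ u⁰`. -/
def IsFutureCausal {n : ℕ} (u : ℝ × EuclideanSpace ℝ (Fin n)) : Prop :=
  0 < u.1 ∧ ‖u.2‖ ≤ u.1

/-- The null-perfect-fluid Einstein tensor with pressure `p` and velocity `v`: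
`G(u, w) := p·η(u, w) + η(v, u)·η(v, w)`. -/
noncomputable def nullFluidG {n : ℕ} (p : ℝ) (v u w : ℝ × EuclideanSpace ℝ (Fin n)) : ℝ :=
  p * minkEta u w + minkEta v u * minkEta v w

lemma eta_nonpos_of_causal {n : ℕ} {u w : ℝ × EuclideanSpace ℝ (Fin n)}
    (hu : IsFutureCausal u) (hw : IsFutureCausal w) : minkEta u w ≤ 0 := by
  have h1 : ⟪u.2, w.2⟫ ≤ ‖u.2‖ * ‖w.2‖ := real_inner_le_norm _ _
  have h2 : ‖u.2‖ * ‖w.2‖ ≤ u.1 * w.1 :=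
    mul_le_mul hu.2 hw.2 (norm_nonneg _) (le_of_lt hu.1)
  simp only [minkEta]
  linarith

/-- for a null perfect fluid (velocity `v` future null or zero),
`G(u, w) ≥ 0` for all future causal `u, w` iff the pressure `p` is nonpositive. -/
theorem nullFluid_dec_iff_pressure_nonpos
    {n : ℕ} (hn : 1 ≤ n) (p : ℝ) (v : ℝ × EuclideanSpace ℝ (Fin n))
    (hv : v.1 = ‖v.2‖) :
    (∀ u w : ℝ × EuclideanSpace ℝ (Fin n),
        IsFutureCausal u → IsFutureCausal w → 0 ≤ nullFluidG p v u w) ↔ p ≤ 0 := by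
  constructor
  · intro h
    set u : ℝ × EuclideanSpace ℝ (Fin n) := (1, (‖v.2‖)⁻¹ • v.2) with hu
    set w : ℝ × EuclideanSpace ℝ (Fin n) := (1, 0) with hw
    have hcu : IsFutureCausal u := by
      constructor
      · norm_num [hu]
      · simp only [hu, norm_smul, norm_inv, norm_norm]
        rcases eq_or_ne (‖v.2‖) 0 with h0 | h0
        · simp [h0]
        · rw [inv_mul_cancel₀ h0]
    have hcw : IsFutureCausal w := by
      constructor <;> simp [hw]
    have hvu : minkEta v u = 0 := by
      simp only [minkEta, hu, real_inner_smul_right, real_inner_self_eq_norm_sq]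
      rcases eq_or_ne (‖v.2‖) 0 with h0 | h0
      · simp [hv, h0]
      · field_simp [hv]
        linarith
    have := h u w hcu hcw
    rw [nullFluidG, hvu] at this
    have heta : minkEta u w = -1 := by
      simp [minkEta, hu, hw]
    rw [heta] at this
    linarith
  · intro hp u w hu hw
    have h1 : minkEta u w ≤ 0 := eta_nonpos_of_causal hu hw
    have hcv : 0 ≤ v.1 := hv ▸ norm_nonneg _
    have h2 : minkEta v u ≤ 0 := by
      have hi : ⟪v.2, u.2⟫ ≤ ‖v.2‖ * ‖u.2‖ := real_inner_le_norm _ _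
      have : ‖v.2‖ * ‖u.2‖ ≤ v.1 * u.1 := by
        rw [hv]; exact mul_le_mul_of_nonneg_left hu.2 (norm_nonneg _)
      simp only [minkEta]; linarith
    have h3 : minkEta v w ≤ 0 := by
      have hi : ⟪v.2, w.2⟫ ≤ ‖v.2‖ * ‖w.2‖ := real_inner_le_norm _ _
      have : ‖v.2‖ * ‖w.2‖ ≤ v.1 * w.1 := by
        rw [hv]; exact mul_le_mul_of_nonneg_left hw.2 (norm_nonneg _)
      simp only [minkEta]; linarith
    have h4 : 0 ≤ minkEta v u * minkEta v w := by nlinarith [h2, h3]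
    have h5 : 0 ≤ p * minkEta u w := by nlinarith [hp, h1]
    unfold nullFluidG
    linarith
end

section
/- Let e₀ := (1, 0) and, for 1 ≤ i ≤ n, let eᵢ := (0, i-th standard basis vector of ℝⁿ). Define μ := G(e₀, e₀) and the vector J ∈ ℝⁿ by Jᵢ := G(e₀, eᵢ). Then: ‖J‖ = (v⁰)², p = ‖J‖ − μ, and J = −v⁰·v'; if J ≠ 0 then v⁰ = √‖J‖ and v' = −J/√‖J‖ (i.e., v = (‖J‖·e₀ − (0,J))/√‖J‖); moreover G(eᵢ, eⱼ) = (‖J‖ − μ)δᵢⱼ + JᵢJⱼ/‖J‖ for all 1 ≤ i, j ≤ n when J ≠ 0, and G(eᵢ, eⱼ) = −μ·δᵢⱼ when J = 0. (Pointwise form of the lemma identifying the velocity and pressure of a null perfect fluid along a spacelike hypersurface in terms of the energy and current densities.) -/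
open scoped RealInnerProductSpace

/-- with `e₀ := (1, 0)`, `eᵢ := (0, i`-th standard basis vector`)`,
`μ := G(e₀, e₀)`, `Jᵢ := G(e₀, eᵢ)`, for a null perfect fluid with future null or zero
velocity `v`:
`‖J‖ = (v⁰)²`, `p = ‖J‖ − μ`, `J = −v⁰·v'`; if `J ≠ 0` then `v⁰ = √‖J‖` and
`v' = −J/√‖J‖`; and `G(eᵢ, eⱼ) = (‖J‖ − μ)δᵢⱼ + JᵢJⱼ/‖J‖` if `J ≠ 0`, while
`G(eᵢ, eⱼ) = −μδᵢⱼ` if `J = 0`. -/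
theorem nullFluid_velocity_pressure_from_energy_current
    {n : ℕ} (hn : 1 ≤ n) (p : ℝ) (v : ℝ × EuclideanSpace ℝ (Fin n))
    (hv : v.1 = ‖v.2‖)
    (e₀ : ℝ × EuclideanSpace ℝ (Fin n)) (he₀ : e₀ = (1, 0))
    (e : Fin n → ℝ × EuclideanSpace ℝ (Fin n))
    (he : ∀ i, e i = (0, EuclideanSpace.single i 1))
    (μ : ℝ) (hμ : μ = nullFluidG p v e₀ e₀)
    (J : EuclideanSpace ℝ (Fin n)) (hJ : ∀ i, J i = nullFluidG p v e₀ (e i)) :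
    ‖J‖ = v.1 ^ 2 ∧
      p = ‖J‖ - μ ∧
      J = -v.1 • v.2 ∧
      (J ≠ 0 → v.1 = Real.sqrt ‖J‖ ∧ v.2 = -(Real.sqrt ‖J‖)⁻¹ • J) ∧
      (J ≠ 0 → ∀ i j, nullFluidG p v (e i) (e j) =
          (‖J‖ - μ) * (if i = j then 1 else 0) + J i * J j / ‖J‖) ∧
      (J = 0 → ∀ i j, nullFluidG p v (e i) (e j) = -μ * (if i = j then 1 else 0)) := by
  have hv0 : 0 ≤ v.1 := hv ▸ norm_nonneg _
  have hJeq : J = -v.1 • v.2 := by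
    ext i
    have := hJ i
    simp only [nullFluidG, minkEta, he, he₀, EuclideanSpace.inner_single_right, map_one,
      inner_zero_left, inner_zero_right] at this
    simp only [this, PiLp.smul_apply, smul_eq_mul, conj_trivial]
    ring
  have hnJ : ‖J‖ = v.1 ^ 2 := by
    rw [hJeq, norm_smul, ← hv]
    simp [abs_of_nonneg hv0, sq]
  have hμ' : μ = -p + v.1 ^ 2 := by
    simp only [hμ, nullFluidG, minkEta, he₀, inner_zero_left, inner_zero_right]
    ring
  have hp : p = ‖J‖ - μ := by rw [hnJ, hμ']; ring
  refine ⟨hnJ, hp, hJeq, ?_, ?_, ?_⟩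
  · intro hJ0
    have hv1 : v.1 ≠ 0 := by
      intro h
      apply hJ0
      rw [hJeq, h]; simp
    have hs : Real.sqrt ‖J‖ = v.1 := by
      rw [hnJ, Real.sqrt_sq hv0]
    refine ⟨hs.symm, ?_⟩
    rw [hs, hJeq]
    ext i
    simp only [PiLp.smul_apply, smul_eq_mul, neg_mul, neg_neg]
    field_simp
  · intro hJ0 i j
    have hv1 : v.1 ≠ 0 := by
      intro h
      apply hJ0
      rw [hJeq, h]; simp
    have hGij : nullFluidG p v (e i) (e j)
        = p * (if i = j then 1 else 0) + v.2 i * v.2 j := by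
      simp only [nullFluidG, minkEta, he, EuclideanSpace.inner_single_right,
        EuclideanSpace.inner_single_left, conj_trivial, one_mul, inner_zero_left,
        inner_zero_right, EuclideanSpace.single_apply]
      by_cases h : i = j
      · subst h; simp
      · rw [if_neg h, if_neg fun hh => h hh.symm]; ring
    have key : J i * J j / ‖J‖ = v.2 i * v.2 j := by
      rw [hnJ]
      simp only [hJeq, PiLp.smul_apply, smul_eq_mul]
      field_simp
    rw [hGij, ← hp, key]
  · intro hJ0 i j
    have hv2 : v.2 = 0 := by
      have h1 : v.1 = 0 := by
        have h := hnJ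
        rw [hJ0, norm_zero] at h
        exact (pow_eq_zero_iff two_ne_zero).mp h.symm
      rw [h1] at hv
      exact norm_eq_zero.mp hv.symm
    have hGij : nullFluidG p v (e i) (e j)
        = p * (if i = j then 1 else 0) + v.2 i * v.2 j := by
      simp only [nullFluidG, minkEta, he, EuclideanSpace.inner_single_right,
        EuclideanSpace.inner_single_left, conj_trivial, one_mul, inner_zero_left,
        inner_zero_right, EuclideanSpace.single_apply]
      by_cases h : i = j
      · subst h; simp
      · rw [if_neg h, if_neg fun hh => h hh.symm]; ring
    rw [hGij, hv2, hp, hJ0]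
    simp
end
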